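/- Let p = 3, S = C₃ × C₃, H = S ⋊ D₈ where the dihedral group D₈ of order 8 acts faithfully on S, and G = S ⋊ (C₂ × C₂) the subgroup corresponding to a Klein four subgroup V of D₈ containing a reflection r such that N = S ⋊ ⟨r⟩ (with r acting as a reflection on S) satisfies N ⊴ G. Then N_H(N) = G, and the fusion system F_S(G) is a proper subsystem of F_S(H); in particular F_S(H) ≠ F_S(N_H(N)). -/

import Mathlib

/-- The elementary abelian group of order 9, written multiplicatively. -/
abbrev V9 : Type := Multiplicative (ZMod 3 × ZMod 3)

/-- Rotation by 90 degrees: `(a, b) ↦ (-b, a)`, an automorphism of order 4 of `C₃ × C₃`. -/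
def rotAut : MulAut V9 where
  toFun v := Multiplicative.ofAdd (-(Multiplicative.toAdd v).2, (Multiplicative.toAdd v).1)
  invFun v := Multiplicative.ofAdd ((Multiplicative.toAdd v).2, -(Multiplicative.toAdd v).1)
  left_inv v := by
    simp [Prod.ext_iff]
  right_inv v := by
    simp [Prod.ext_iff]
  map_mul' v w := by
    simp [← ofAdd_add, Prod.ext_iff, neg_add, add_comm]

/-- A reflection: `(a, b) ↦ (a, -b)`, an automorphism of order 2 of `C₃ × C₃`. -/
def refAut : MulAut V9 where
  toFun v := Multiplicative.ofAdd ((Multiplicative.toAdd v).1, -(Multiplicative.toAdd v).2)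
  invFun v := Multiplicative.ofAdd ((Multiplicative.toAdd v).1, -(Multiplicative.toAdd v).2)
  left_inv v := by
    simp [Prod.ext_iff]
  right_inv v := by
    simp [Prod.ext_iff]
  map_mul' v w := by
    simp [← ofAdd_add, Prod.ext_iff, neg_add, add_comm]

/-- The dihedral group of order 8, acting faithfully on `C₃ × C₃`. -/
def D8 : Subgroup (MulAut V9) := Subgroup.closure {rotAut, refAut}

/-- The Klein four subgroup `⟨rot², ref⟩` of `D8`. -/
def VKlein : Subgroup ↥D8 :=
  Subgroup.closure
    {⟨rotAut ^ 2, pow_mem (Subgroup.subset_closure (by simp)) 2⟩,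
     ⟨refAut, Subgroup.subset_closure (by simp)⟩}

/-- The subgroup `⟨ref⟩` of order 2 of `D8`, generated by a reflection. -/
def RRef : Subgroup ↥D8 :=
  Subgroup.closure {⟨refAut, Subgroup.subset_closure (by simp)⟩}

/-- The group `H = (C₃ × C₃) ⋊ D₈`. -/
abbrev Hgrp : Type := V9 ⋊[D8.subtype] ↥D8

/-- `S = C₃ × C₃`, a Sylow 3-subgroup of `H`. -/
def Sgrp : Subgroup Hgrp := Subgroup.comap SemidirectProduct.rightHom (⊥ : Subgroup ↥D8)

/-- `G = (C₃ × C₃) ⋊ (C₂ × C₂)`. -/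
def Ggrp : Subgroup Hgrp := Subgroup.comap SemidirectProduct.rightHom VKlein

/-- `N = (C₃ × C₃) ⋊ ⟨r⟩`, with `r` acting as a reflection. -/
def Ngrp : Subgroup Hgrp := Subgroup.comap SemidirectProduct.rightHom RRef

/-- `F_S(A) ⊇ F_S(B)` for subgroups `S, A, B` of a group `H`: every morphism of the fusion
system of `B` on `S` (a conjugation map `Q → S` by an element of `B`) is realised by
conjugation by an element of `A`. -/
def fusionLE {H : Type*} [Group H] (S A B : Subgroup H) : Prop :=
  ∀ Q : Subgroup H, Q ≤ S → ∀ b ∈ B, (∀ q ∈ Q, b * q * b⁻¹ ∈ S) →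
    ∃ a ∈ A, ∀ q ∈ Q, a * q * a⁻¹ = b * q * b⁻¹

/-! ### Auxiliary machinery -/

open SemidirectProduct Subgroup

def Xgen : V9 := Multiplicative.ofAdd (1, 0)
def Ygen : V9 := Multiplicative.ofAdd (0, 1)

lemma gen_decomp : ∀ v : V9,
    v = Xgen ^ ((Multiplicative.toAdd v).1.val) * Ygen ^ ((Multiplicative.toAdd v).2.val) := by
  decide

lemma autExt {a b : MulAut V9} (h1 : a Xgen = b Xgen) (h2 : a Ygen = b Ygen) : a = b := by
  ext v : 1
  rw [gen_decomp v, map_mul, map_mul, map_pow, map_pow, map_pow, map_pow, h1, h2]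

instance : DecidableEq (MulAut V9) := fun a b =>
  decidable_of_iff (a Xgen = b Xgen ∧ a Ygen = b Ygen)
    ⟨fun h => autExt h.1 h.2, fun h => by rw [h]; exact ⟨rfl, rfl⟩⟩

def Dl : List (MulAut V9) :=
  [1, rotAut, rotAut^2, rotAut^3, refAut, rotAut*refAut, rotAut^2*refAut, rotAut^3*refAut]
def Vl : List (MulAut V9) := [1, rotAut^2, refAut, rotAut^2*refAut]
def Rl : List (MulAut V9) := [1, refAut]

def listSubgroup (l : List (MulAut V9)) (h1 : (1:MulAut V9) ∈ l)
    (hmul : ∀ a ∈ l, ∀ b ∈ l, a*b ∈ l) (hinv : ∀ a ∈ l, a⁻¹ ∈ l) : Subgroup (MulAut V9) where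
  carrier := {x | x ∈ l}
  one_mem' := h1
  mul_mem' := fun ha hb => hmul _ ha _ hb
  inv_mem' := fun ha => hinv _ ha

def K8 : Subgroup (MulAut V9) := listSubgroup Dl (by decide)
  (by intro a ha b hb; fin_cases ha <;> fin_cases hb <;> decide)
  (by intro a ha; fin_cases ha <;> decide)

def K4 : Subgroup (MulAut V9) := listSubgroup Vl (by decide)
  (by intro a ha b hb; fin_cases ha <;> fin_cases hb <;> decide)
  (by intro a ha; fin_cases ha <;> decide)

def K2 : Subgroup (MulAut V9) := listSubgroup Rl (by decide)
  (by intro a ha b hb; fin_cases ha <;> fin_cases hb <;> decide)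
  (by intro a ha; fin_cases ha <;> decide)

lemma rot_mem : rotAut ∈ D8 := Subgroup.subset_closure (Set.mem_insert _ _)
lemma ref_mem : refAut ∈ D8 := Subgroup.subset_closure (Set.mem_insert_of_mem _ rfl)

lemma hD8 : D8 = K8 := by
  apply le_antisymm
  · rw [D8, Subgroup.closure_le]
    rintro x (rfl | rfl) <;> [skip; skip] <;> first
    | exact (by decide : rotAut ∈ Dl)
    | exact (by decide : refAut ∈ Dl)
  · intro x hx
    have hx' : x ∈ Dl := hx
    fin_cases hx'
    exacts [one_mem _, rot_mem, pow_mem rot_mem 2, pow_mem rot_mem 3, ref_mem,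
      mul_mem rot_mem ref_mem, mul_mem (pow_mem rot_mem 2) ref_mem,
      mul_mem (pow_mem rot_mem 3) ref_mem]

lemma hC4 : Subgroup.closure {rotAut^2, refAut} = K4 := by
  apply le_antisymm
  · rw [Subgroup.closure_le]
    rintro x (rfl | rfl) <;> first
    | exact (by decide : rotAut^2 ∈ Vl)
    | exact (by decide : refAut ∈ Vl)
  · intro x hx
    have hx' : x ∈ Vl := hx
    have hr2 : rotAut^2 ∈ Subgroup.closure {rotAut^2, refAut} :=
      Subgroup.subset_closure (Set.mem_insert _ _)
    have hrf : refAut ∈ Subgroup.closure {rotAut^2, refAut} :=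
      Subgroup.subset_closure (Set.mem_insert_of_mem _ rfl)
    fin_cases hx'
    exacts [one_mem _, hr2, hrf, mul_mem hr2 hrf]

lemma hC2 : Subgroup.closure {refAut} = K2 := by
  apply le_antisymm
  · rw [Subgroup.closure_le]
    rintro x rfl
    exact (by decide : refAut ∈ Rl)
  · intro x hx
    have hx' : x ∈ Rl := hx
    have hrf : refAut ∈ Subgroup.closure {refAut} := Subgroup.subset_closure rfl
    fin_cases hx'
    exacts [one_mem _, hrf]

lemma cardList (l : List (MulAut V9)) (h1 : (1:MulAut V9) ∈ l)
    (hmul : ∀ a ∈ l, ∀ b ∈ l, a*b ∈ l) (hinv : ∀ a ∈ l, a⁻¹ ∈ l) :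
    Nat.card ↥(listSubgroup l h1 hmul hinv) = l.toFinset.card := by
  have hset : ((listSubgroup l h1 hmul hinv : Subgroup (MulAut V9)) : Set (MulAut V9)) =
      ↑l.toFinset := by
    ext x
    simp [listSubgroup]
  have : Nat.card ↥(listSubgroup l h1 hmul hinv) = Nat.card ↥(↑l.toFinset : Set (MulAut V9)) :=
    Nat.card_congr (Equiv.setCongr hset)
  rw [this, Nat.card_coe_set_eq, Set.ncard_coe_finset]

lemma cardD8 : Nat.card ↥D8 = 8 := by
  rw [hD8, K8, cardList]
  decide

lemma map_VKlein : Subgroup.map D8.subtype VKlein = Subgroup.closure {rotAut^2, refAut} := by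
  rw [VKlein, MonoidHom.map_closure]
  congr 1
  rw [Set.image_insert_eq, Set.image_singleton]
  rfl

lemma map_RRef : Subgroup.map D8.subtype RRef = Subgroup.closure {refAut} := by
  rw [RRef, MonoidHom.map_closure]
  congr 1
  rw [Set.image_singleton]
  rfl

lemma mem_VKlein_iff (x : ↥D8) : x ∈ VKlein ↔ (x : MulAut V9) ∈ Vl := by
  have h := Subgroup.mem_map_iff_mem (f := D8.subtype) (K := VKlein) (x := x)
    (Subgroup.subtype_injective D8)
  rw [map_VKlein, hC4] at h
  exact h.symm

lemma mem_RRef_iff (x : ↥D8) : x ∈ RRef ↔ (x : MulAut V9) ∈ Rl := by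
  have h := Subgroup.mem_map_iff_mem (f := D8.subtype) (K := RRef) (x := x)
    (Subgroup.subtype_injective D8)
  rw [map_RRef, hC2] at h
  exact h.symm

lemma cardVKlein : Nat.card ↥VKlein = 4 := by
  have : Nat.card ↥VKlein = Nat.card ↥(Subgroup.map D8.subtype VKlein) :=
    Nat.card_congr (Subgroup.equivMapOfInjective VKlein D8.subtype
      (Subgroup.subtype_injective D8)).toEquiv
  rw [this, map_VKlein, hC4, K4, cardList]
  decide

lemma cardRRef : Nat.card ↥RRef = 2 := by
  have : Nat.card ↥RRef = Nat.card ↥(Subgroup.map D8.subtype RRef) :=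
    Nat.card_congr (Subgroup.equivMapOfInjective RRef D8.subtype
      (Subgroup.subtype_injective D8)).toEquiv
  rw [this, map_RRef, hC2, K2, cardList]
  decide

lemma cardV9 : Nat.card V9 = 9 := by
  rw [Nat.card_eq_fintype_card]
  rfl

lemma Sgrp_eq_range : Sgrp = (SemidirectProduct.inl : V9 →* Hgrp).range := by
  rw [Sgrp, MonoidHom.comap_bot, SemidirectProduct.range_inl_eq_ker_rightHom]

lemma cardSgrp : Nat.card ↥Sgrp = 9 := by
  rw [Sgrp_eq_range]
  rw [← cardV9]
  exact (Nat.card_congr (MonoidHom.ofInjective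
    (SemidirectProduct.inl_injective (φ := D8.subtype))).toEquiv).symm

def prodEquiv : Hgrp ≃ V9 × ↥D8 where
  toFun x := (x.left, x.right)
  invFun p := ⟨p.1, p.2⟩
  left_inv x := rfl
  right_inv p := rfl

lemma cardHgrp : Nat.card Hgrp = 72 := by
  rw [Nat.card_congr prodEquiv, Nat.card_prod, cardV9, cardD8]

instance : Finite ↥D8 := Nat.finite_of_card_ne_zero (by rw [cardD8]; norm_num)
instance : Finite Hgrp := Finite.of_equiv _ prodEquiv.symm

lemma fact72 : (72 : ℕ).factorization 3 = 2 := by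
  have h8 : (8:ℕ).factorization 3 = 0 := Nat.factorization_eq_zero_of_not_dvd (by norm_num)
  rw [show (72:ℕ) = 8 * 9 by norm_num, Nat.factorization_mul (by norm_num) (by norm_num),
    Finsupp.add_apply, h8, zero_add, show (9:ℕ) = 3 ^ 2 by norm_num,
    Nat.Prime.factorization_pow (by norm_num), Finsupp.single_eq_same]

lemma sylowSgrp : ∃ Syl : Sylow 3 Hgrp, (Syl : Subgroup Hgrp) = Sgrp := by
  haveI : Fact (Nat.Prime 3) := ⟨by norm_num⟩
  refine ⟨Sylow.ofCard Sgrp ?_, rfl⟩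
  rw [cardSgrp, cardHgrp, fact72]
  norm_num

lemma NleG : Ngrp ≤ Ggrp := by
  apply Subgroup.comap_mono
  rw [RRef, Subgroup.closure_le]
  rintro x rfl
  exact Subgroup.subset_closure (Set.mem_insert_of_mem _ rfl)

lemma RRef_norm : Subgroup.normalizer (RRef : Set ↥D8) = VKlein := by
  apply le_antisymm
  · intro x hx
    rw [mem_VKlein_iff]
    have h8 : (x : MulAut V9) ∈ Dl := by
      exact hD8.le x.2
    set gs : ↥D8 := ⟨refAut, ref_mem⟩ with hgsdef
    have hgs : gs ∈ RRef := Subgroup.subset_closure rfl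
    have h2 := (Subgroup.mem_normalizer_iff.mp hx gs).mp hgs
    rw [mem_RRef_iff] at h2
    have h2' : (x : MulAut V9) * refAut * (x : MulAut V9)⁻¹ ∈ Rl := by
      simpa using h2
    simp only [Dl, List.mem_cons, List.mem_singleton, List.not_mem_nil, or_false] at h8
    rcases h8 with h|h|h|h|h|h|h|h <;> rw [h] at h2' ⊢ <;>
      first
      | decide
      | exact absurd h2' (by decide)
  · intro x hx
    rw [mem_VKlein_iff] at hx
    rw [Subgroup.mem_normalizer_iff]
    intro h
    rw [mem_RRef_iff, mem_RRef_iff]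
    have hcoe : ((x*h*x⁻¹ : ↥D8) : MulAut V9) = ↑x * ↑h * (↑x : MulAut V9)⁻¹ := by
      push_cast
      rfl
    rw [hcoe]
    have h8 : (h : MulAut V9) ∈ Dl := by
      exact hD8.le h.2
    simp only [Vl, List.mem_cons, List.mem_singleton, List.not_mem_nil, or_false] at hx
    simp only [Dl, List.mem_cons, List.mem_singleton, List.not_mem_nil, or_false] at h8
    rcases hx with hv|hv|hv|hv <;> rcases h8 with hd|hd|hd|hd|hd|hd|hd|hd <;>
      rw [hv, hd] <;> decide

lemma Ngrp_norm : Subgroup.normalizer (Ngrp : Set Hgrp) = Ggrp := by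
  show Subgroup.normalizer ((Subgroup.comap SemidirectProduct.rightHom RRef : Subgroup Hgrp) : Set Hgrp) = Ggrp
  rw [← Subgroup.comap_normalizer_eq_of_surjective RRef
    SemidirectProduct.rightHom_surjective, RRef_norm]
  rfl

lemma conj_inl (x : Hgrp) (v : V9) :
    x * SemidirectProduct.inl v * x⁻¹ = SemidirectProduct.inl ((D8.subtype x.right) v) := by
  have h1 : ∀ (w u : V9), w * u * w⁻¹ = u := fun w u => by
    rw [mul_comm w u, mul_inv_cancel_right]
  conv_lhs => rw [← SemidirectProduct.inl_left_mul_inr_right x]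
  rw [mul_inv_rev, ← map_inv, ← map_inv]
  rw [show SemidirectProduct.inl x.left * SemidirectProduct.inr x.right *
      SemidirectProduct.inl v * (SemidirectProduct.inr x.right⁻¹ *
      SemidirectProduct.inl x.left⁻¹) =
      SemidirectProduct.inl x.left * (SemidirectProduct.inr x.right *
      SemidirectProduct.inl v * SemidirectProduct.inr x.right⁻¹) *
      SemidirectProduct.inl x.left⁻¹ by group]
  rw [← SemidirectProduct.inl_aut, ← map_mul, ← map_mul, h1]

lemma mem_Sgrp_iff (q : Hgrp) : q ∈ Sgrp ↔ SemidirectProduct.rightHom q = 1 := by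
  rw [Sgrp, Subgroup.mem_comap, Subgroup.mem_bot]

lemma fusion_top : fusionLE Sgrp ⊤ Ggrp := by
  intro Q hQ b hb hc
  exact ⟨b, Subgroup.mem_top b, fun q hq => rfl⟩

lemma not_fusion : ¬ fusionLE Sgrp Ggrp ⊤ := by
  intro hf
  obtain ⟨a, haG, ha⟩ := hf Sgrp le_rfl (SemidirectProduct.inr ⟨rotAut, rot_mem⟩)
    (Subgroup.mem_top _) (by
      intro q hq
      rw [mem_Sgrp_iff] at hq ⊢
      rw [map_mul, map_mul, map_inv, hq, mul_one, mul_inv_cancel])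
  have key : ∀ v : V9, (a.right : MulAut V9) v = rotAut v := by
    intro v
    have hv : SemidirectProduct.inl v ∈ Sgrp := by
      rw [mem_Sgrp_iff, SemidirectProduct.rightHom_inl]
    have heq := ha _ hv
    rw [conj_inl, conj_inl] at heq
    have := SemidirectProduct.inl_injective heq
    simpa using this
  have haut : (a.right : MulAut V9) = rotAut := autExt (key Xgen) (key Ygen)
  have hmem : a.right ∈ VKlein := by
    rw [Ggrp, Subgroup.mem_comap] at haG
    exact haG
  rw [mem_VKlein_iff, haut] at hmem
  exact absurd hmem (by decide)

/-- Let `p = 3`, `S = C₃ × C₃`, `H = S ⋊ D₈` with `D₈` of order 8 acting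
faithfully, `G = S ⋊ V` for a Klein four subgroup `V ≤ D₈` containing a reflection `r`, and
`N = S ⋊ ⟨r⟩`, so that `N ⊴ G`.  Then `S` is a Sylow 3-subgroup of `H`, `N_H(N) = G`, and the
fusion system `F_S(G)` is a proper subsystem of `F_S(H)`; in particular
`F_S(H) ≠ F_S(N_H(N))`. -/
theorem fusion_of_normalizer_differs :
    Nat.card ↥D8 = 8 ∧ Nat.card ↥VKlein = 4 ∧ Nat.card ↥RRef = 2 ∧
    Nat.card ↥Sgrp = 9 ∧
    (∃ Syl : Sylow 3 Hgrp, (Syl : Subgroup Hgrp) = Sgrp) ∧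
    Ngrp ≤ Ggrp ∧ Subgroup.normalizer (Ngrp : Set Hgrp) = Ggrp ∧
    fusionLE Sgrp ⊤ Ggrp ∧ ¬ fusionLE Sgrp Ggrp ⊤ := by
  exact ⟨cardD8, cardVKlein, cardRRef, cardSgrp, sylowSgrp, NleG, Ngrp_norm, fusion_top, not_fusion⟩
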